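/- Let Γ be a group acting by isometries on a metric space X, let μ be a Γ-invariant Borel measure on X with μ(closedBall z R) < ∞ for every z ∈ X and R > 0, and let x ∈ X. Assume there exist D > 0 such that every point of X lies within distance D of the orbit Γ·x, and δ > 0 such that dist(γ·x, γ'·x) ≥ δ for all γ ≠ γ' in Γ, and assume μ(ball x (δ/2)) > 0. Then each set Γ(R) = {γ ∈ Γ : dist(x, γ·x) ≤ R} is finite, and limsup_{R→∞} (log |Γ(R)|)/R = limsup_{R→∞} (log μ(closedBall x R))/R. -/

import Mathlib

open Metric MeasureTheory Set Filter

open scoped ENNReal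


lemma limsup_div_eq_of_shift (u w : ℝ → ℝ) (c C : ℝ) (hc : 0 < c)
    (h1 : ∀ᶠ R in atTop, u R ≤ w (R + c) + C)
    (h2 : ∀ᶠ R in atTop, w R ≤ u (R + c) + C)
    (hu : ∀ᶠ R in atTop, -1 ≤ u R / R)
    (hw : ∀ᶠ R in atTop, -1 ≤ w R / R) :
    limsup (fun R => u R / R) atTop = limsup (fun R => w R / R) atTop := by
  have key : ∀ f g : ℝ → ℝ, (∀ᶠ R in atTop, f R ≤ g (R + c) + C) →
      ∀ a ε : ℝ, 0 < ε → (∀ᶠ R in atTop, g R / R ≤ a) →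
      ∀ᶠ R in atTop, f R / R ≤ a + ε := by
    intro f g hfg a ε hε hga
    rw [eventually_atTop] at hga hfg ⊢
    obtain ⟨M, hM⟩ := hga
    obtain ⟨M', hM'⟩ := hfg
    refine ⟨max (max M M') (max 1 (|a * c + C| / ε)), fun R hR => ?_⟩
    have hR1 : (1:ℝ) ≤ R := le_trans (le_max_left _ _) (le_trans (le_max_right _ _) hR)
    have hRpos : (0:ℝ) < R := lt_of_lt_of_le one_pos hR1
    have hRM : M ≤ R := le_trans (le_max_left _ _) (le_trans (le_max_left _ _) hR)
    have hRM' : M' ≤ R := le_trans (le_max_right _ _) (le_trans (le_max_left _ _) hR)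
    have hRε : |a * c + C| / ε ≤ R := le_trans (le_max_right _ _) (le_trans (le_max_right _ _) hR)
    have hg : g (R + c) / (R + c) ≤ a := hM _ (by linarith)
    have hRc : (0:ℝ) < R + c := by linarith
    have hg' : g (R + c) ≤ a * (R + c) := by
      have := (div_le_iff₀ hRc).mp hg; linarith
    have hf : f R ≤ a * R + (a * c + C) := by
      have := hM' R hRM'; nlinarith
    rw [div_le_iff₀ hRpos]
    have habs : a * c + C ≤ ε * R := by
      have h1 : |a * c + C| ≤ ε * R := by
        rw [div_le_iff₀ hε] at hRε; linarith [mul_comm ε R]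
      linarith [le_abs_self (a * c + C)]
    nlinarith
  have hUb : ∀ a, (∀ᶠ R in atTop, u R / R ≤ a) → -1 ≤ a := by
    intro a ha
    obtain ⟨R, h1', h2'⟩ := (hu.and ha).exists
    linarith
  have hWb : ∀ a, (∀ᶠ R in atTop, w R / R ≤ a) → -1 ≤ a := by
    intro a ha
    obtain ⟨R, h1', h2'⟩ := (hw.and ha).exists
    linarith
  rw [limsup_eq, limsup_eq]
  set U : Set ℝ := {a | ∀ᶠ R in atTop, u R / R ≤ a} with hU
  set W : Set ℝ := {a | ∀ᶠ R in atTop, w R / R ≤ a} with hWdef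
  have hbU : BddBelow U := ⟨-1, fun a ha => hUb a ha⟩
  have hbW : BddBelow W := ⟨-1, fun a ha => hWb a ha⟩
  have hWU : ∀ a ∈ W, ∀ ε : ℝ, 0 < ε → a + ε ∈ U := fun a ha ε hε => key u w h1 a ε hε ha
  have hUW : ∀ a ∈ U, ∀ ε : ℝ, 0 < ε → a + ε ∈ W := fun a ha ε hε => key w u h2 a ε hε ha
  rcases eq_empty_or_nonempty W with hWe | hWe
  · rcases eq_empty_or_nonempty U with hU' | hU'
    · rw [hU', hWe]
    · obtain ⟨a, ha⟩ := hU'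
      exact absurd (hUW a ha 1 one_pos) (by rw [hWe]; simp)
  · obtain ⟨b, hb⟩ := id hWe
    have hU' : U.Nonempty := ⟨b + 1, hWU b hb 1 one_pos⟩
    apply le_antisymm
    · refine le_csInf hWe fun a ha => le_of_forall_pos_le_add fun ε hε => csInf_le hbU (hWU a ha ε hε)
    · refine le_csInf hU' fun a ha => le_of_forall_pos_le_add fun ε hε => csInf_le hbW (hUW a ha ε hε)


/-- for a cocompact, uniformly separated, measure-preserving isometric
action, the orbit sets are finite and the exponential growth rate of orbit counts
equals the exponential volume growth rate. -/
theorem stmt_3 {Γ X : Type*} [Group Γ] [MetricSpace X] [MeasurableSpace X]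
    [BorelSpace X] [MulAction Γ X]
    (hiso : ∀ γ : Γ, Isometry (fun p : X => γ • p))
    (μ : Measure X)
    (hinv : ∀ (γ : Γ) (A : Set X), MeasurableSet A → μ ((fun p : X => γ • p) '' A) = μ A)
    (hfin : ∀ (z : X) (R : ℝ), 0 < R → μ (closedBall z R) < ⊤)
    (x : X)
    (D : ℝ) (hD : 0 < D) (hdense : ∀ z : X, ∃ γ : Γ, dist z (γ • x) ≤ D)
    (δ : ℝ) (hδ : 0 < δ)
    (hsep : ∀ γ γ' : Γ, γ ≠ γ' → δ ≤ dist (γ • x) (γ' • x))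
    (hpos : 0 < μ (ball x (δ / 2))) :
    (∀ R : ℝ, {γ : Γ | dist x (γ • x) ≤ R}.Finite) ∧
      limsup (fun R : ℝ => Real.log ({γ : Γ | dist x (γ • x) ≤ R}.ncard) / R) atTop =
        limsup (fun R : ℝ => Real.log (μ (closedBall x R)).toReal / R) atTop := by
  -- isometry equivalence for each γ
  have hmapb : ∀ (γ : Γ) (z : X) (r : ℝ), (fun p : X => γ • p) '' ball z r = ball (γ • z) r := by
    intro γ z r
    exact IsometryEquiv.image_ball ⟨MulAction.toPerm γ, hiso γ⟩ z r
  have hmapc : ∀ (γ : Γ) (z : X) (r : ℝ),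
      (fun p : X => γ • p) '' closedBall z r = closedBall (γ • z) r := by
    intro γ z r
    exact IsometryEquiv.image_closedBall ⟨MulAction.toPerm γ, hiso γ⟩ z r
  have μball : ∀ (γ : Γ) (r : ℝ), μ (ball (γ • x) r) = μ (ball x r) := by
    intro γ r
    rw [← hmapb γ x r]
    exact hinv γ _ measurableSet_ball
  have μcball : ∀ (γ : Γ) (r : ℝ), μ (closedBall (γ • x) r) = μ (closedBall x r) := by
    intro γ r
    rw [← hmapc γ x r]
    exact hinv γ _ measurableSet_closedBall
  have hdisj : ∀ γ γ' : Γ, γ ≠ γ' → Disjoint (ball (γ • x) (δ / 2)) (ball (γ' • x) (δ / 2)) := by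
    intro γ γ' h
    exact ball_disjoint_ball (by linarith [hsep γ γ' h])
  -- finiteness
  have hfinΓ : ∀ R : ℝ, {γ : Γ | dist x (γ • x) ≤ R}.Finite := by
    intro R
    rcases lt_or_ge R 0 with hR | hR
    · have : {γ : Γ | dist x (γ • x) ≤ R} = ∅ := by
        ext γ
        simp only [mem_setOf_eq, mem_empty_iff_false, iff_false, not_le]
        exact lt_of_lt_of_le hR dist_nonneg
      rw [this]; exact finite_empty
    · by_contra hinf
      have hinf' : {γ : Γ | dist x (γ • x) ≤ R}.Infinite := hinf
      set f := hinf'.natEmbedding with hf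
      have hpd : Pairwise (Function.onFun Disjoint fun n : ℕ => ball (((f n : Γ)) • x) (δ / 2)) := by
        intro m n hmn
        exact hdisj _ _ fun h => hmn (f.injective (Subtype.coe_injective h))
      have hUeq := measure_iUnion (μ := μ) hpd (fun n => measurableSet_ball)
      have hsub : (⋃ n : ℕ, ball ((f n : Γ) • x) (δ / 2)) ⊆ closedBall x (R + δ / 2) := by
        intro z hz
        obtain ⟨n, hn⟩ := mem_iUnion.mp hz
        have h1 : dist z ((f n : Γ) • x) < δ / 2 := mem_ball.mp hn
        have h2 : dist x ((f n : Γ) • x) ≤ R := (f n).2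
        rw [mem_closedBall]
        calc dist z x ≤ dist z ((f n : Γ) • x) + dist ((f n : Γ) • x) x := dist_triangle _ _ _
          _ ≤ δ / 2 + R := by rw [dist_comm ((f n : Γ) • x) x]; linarith
          _ = R + δ / 2 := by ring
      have htop : μ (⋃ n : ℕ, ball ((f n : Γ) • x) (δ / 2)) = ⊤ := by
        rw [hUeq]
        have : ∀ n : ℕ, μ (ball ((f n : Γ) • x) (δ / 2)) = μ (ball x (δ / 2)) :=
          fun n => μball _ _
        rw [tsum_congr this]
        exact ENNReal.tsum_const_eq_top_of_ne_zero hpos.ne'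
      have := (measure_mono hsub).trans_lt (hfin x (R + δ / 2) (by linarith))
      rw [htop] at this
      exact absurd this (by simp)
  refine ⟨hfinΓ, ?_⟩
  -- notation
  set N : ℝ → ℕ := fun R => {γ : Γ | dist x (γ • x) ≤ R}.ncard with hN
  have hNone : ∀ R : ℝ, 0 ≤ R → 1 ≤ N R := by
    intro R hR
    have hne : {γ : Γ | dist x (γ • x) ≤ R}.Nonempty :=
      ⟨1, by simp only [mem_setOf_eq, one_smul, dist_self]; exact hR⟩
    exact (Set.ncard_pos (hfinΓ R)).mpr hne
  have hNmono : ∀ R S : ℝ, R ≤ S → N R ≤ N S := by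
    intro R S hRS
    exact Set.ncard_le_ncard (fun γ hγ => le_trans hγ hRS) (hfinΓ S)
  set c : ℝ := max D (δ / 2) with hcdef
  have hc : 0 < c := lt_of_lt_of_le hD (le_max_left _ _)
  have hδc : δ / 2 ≤ c := le_max_right _ _
  have hDc : D ≤ c := le_max_left _ _
  -- counting bound : N R * v ≤ μ (closedBall x (R + c))
  have hcount : ∀ R : ℝ, 0 ≤ R →
      (N R : ℝ≥0∞) * μ (ball x (δ / 2)) ≤ μ (closedBall x (R + c)) := by
    intro R hR
    set s : Finset Γ := (hfinΓ R).toFinset with hs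
    have hcard : N R = s.card := Set.ncard_eq_toFinset_card _ (hfinΓ R)
    have hpd : Set.PairwiseDisjoint (↑s) (fun γ : Γ => ball (γ • x) (δ / 2)) :=
      fun γ _ γ' _ h => hdisj γ γ' h
    have hum := measure_biUnion_finset (μ := μ) hpd (fun γ _ => measurableSet_ball)
    have hsub : (⋃ γ ∈ s, ball (γ • x) (δ / 2)) ⊆ closedBall x (R + c) := by
      intro z hz
      simp only [mem_iUnion] at hz
      obtain ⟨γ, hγs, hγ⟩ := hz
      have h2 : dist x (γ • x) ≤ R := by
        have := (Set.Finite.mem_toFinset _).mp hγs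
        exact this
      rw [mem_closedBall]
      have h1 : dist z (γ • x) < δ / 2 := mem_ball.mp hγ
      calc dist z x ≤ dist z (γ • x) + dist (γ • x) x := dist_triangle _ _ _
        _ ≤ δ / 2 + R := by rw [dist_comm (γ • x) x]; linarith
        _ ≤ R + c := by linarith
    calc (N R : ℝ≥0∞) * μ (ball x (δ / 2))
        = ∑ γ ∈ s, μ (ball (γ • x) (δ / 2)) := by
          rw [Finset.sum_congr rfl (fun γ _ => μball γ (δ / 2)), Finset.sum_const, hcard,
            nsmul_eq_mul]
      _ = μ (⋃ γ ∈ s, ball (γ • x) (δ / 2)) := hum.symm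
      _ ≤ μ (closedBall x (R + c)) := measure_mono hsub
  -- covering bound : μ (closedBall x R) ≤ N (R + c) * μ (closedBall x c)
  have hcover : ∀ R : ℝ, 0 ≤ R →
      μ (closedBall x R) ≤ (N (R + c) : ℝ≥0∞) * μ (closedBall x c) := by
    intro R hR
    set s : Finset Γ := (hfinΓ (R + c)).toFinset with hs
    have hcard : N (R + c) = s.card := Set.ncard_eq_toFinset_card _ (hfinΓ (R + c))
    have hsub : closedBall x R ⊆ ⋃ γ ∈ s, closedBall (γ • x) c := by
      intro z hz
      obtain ⟨γ, hγ⟩ := hdense z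
      have hγmem : γ ∈ s := by
        rw [Set.Finite.mem_toFinset]
        calc dist x (γ • x) ≤ dist x z + dist z (γ • x) := dist_triangle _ _ _
          _ ≤ R + D := add_le_add (by rw [dist_comm]; exact mem_closedBall.mp hz) hγ
          _ ≤ R + c := by linarith
      simp only [mem_iUnion]
      exact ⟨γ, hγmem, mem_closedBall.mpr (le_trans hγ hDc)⟩
    calc μ (closedBall x R) ≤ μ (⋃ γ ∈ s, closedBall (γ • x) c) := measure_mono hsub
      _ ≤ ∑ γ ∈ s, μ (closedBall (γ • x) c) := measure_biUnion_finset_le _ _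
      _ = (N (R + c) : ℝ≥0∞) * μ (closedBall x c) := by
          rw [Finset.sum_congr rfl (fun γ _ => μcball γ c), Finset.sum_const, hcard, nsmul_eq_mul]
  -- real-valued quantities
  set v : ℝ := (μ (ball x (δ / 2))).toReal with hv
  have hvfin : μ (ball x (δ / 2)) ≠ ⊤ :=
    ((measure_mono ball_subset_closedBall).trans_lt (hfin x (δ / 2) (by linarith))).ne
  have hvpos : 0 < v := ENNReal.toReal_pos hpos.ne' hvfin
  set V : ℝ → ℝ := fun R => (μ (closedBall x R)).toReal with hV
  have hVfin : ∀ R : ℝ, 0 < R → μ (closedBall x R) ≠ ⊤ := fun R hR => (hfin x R hR).ne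
  have hVpos : ∀ R : ℝ, c ≤ R → 0 < V R := by
    intro R hR
    apply ENNReal.toReal_pos _ (hVfin R (lt_of_lt_of_le hc hR))
    intro h0
    have : μ (ball x (δ / 2)) ≤ μ (closedBall x R) :=
      measure_mono (ball_subset_closedBall.trans (closedBall_subset_closedBall (by linarith)))
    rw [h0] at this
    exact absurd (le_antisymm this zero_le) hpos.ne'
  have hWpos : 0 < V c := hVpos c le_rfl
  -- inequality 1: log (N R) ≤ log (V (R + c)) + (- log v)
  have h1 : ∀ᶠ R in atTop, Real.log (N R) ≤ Real.log (V (R + c)) + (- Real.log v) := by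
    filter_upwards [eventually_ge_atTop (0:ℝ)] with R hR
    have hc1 := hcount R hR
    have hRc : 0 < R + c := by linarith
    have hNR : (0:ℝ) < (N R : ℝ) := by exact_mod_cast hNone R hR
    have hle : (N R : ℝ) * v ≤ V (R + c) := by
      have := ENNReal.toReal_mono (hVfin _ hRc) hc1
      rwa [ENNReal.toReal_mul, ENNReal.toReal_natCast] at this
    have hlog : Real.log ((N R : ℝ) * v) ≤ Real.log (V (R + c)) :=
      Real.log_le_log (by positivity) hle
    rw [Real.log_mul (by positivity) hvpos.ne'] at hlog
    linarith
  -- inequality 2: log (V R) ≤ log (N (R + c)) + log (V c)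
  have h2 : ∀ᶠ R in atTop, Real.log (V R) ≤ Real.log (N (R + c)) + Real.log (V c) := by
    filter_upwards [eventually_ge_atTop c] with R hR
    have hRpos : 0 < R := lt_of_lt_of_le hc hR
    have hc2 := hcover R hRpos.le
    have hNRc : (0:ℝ) < (N (R + c) : ℝ) := by
      exact_mod_cast hNone (R + c) (by linarith)
    have hle : V R ≤ (N (R + c) : ℝ) * V c := by
      have hfin2 : (N (R + c) : ℝ≥0∞) * μ (closedBall x c) ≠ ⊤ :=
        ENNReal.mul_ne_top (by simp) (hVfin c hc)
      have := ENNReal.toReal_mono hfin2 hc2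
      rwa [ENNReal.toReal_mul, ENNReal.toReal_natCast] at this
    have hlog : Real.log (V R) ≤ Real.log ((N (R + c) : ℝ) * V c) :=
      Real.log_le_log (hVpos R hR) hle
    rw [Real.log_mul hNRc.ne' hWpos.ne'] at hlog
    linarith
  -- common constant
  set C : ℝ := max (- Real.log v) (Real.log (V c)) with hC
  have h1' : ∀ᶠ R in atTop, Real.log (N R) ≤ Real.log (V (R + c)) + C := by
    filter_upwards [h1] with R hR
    have := le_max_left (- Real.log v) (Real.log (V c))
    linarith
  have h2' : ∀ᶠ R in atTop, Real.log (V R) ≤ Real.log (N (R + c)) + C := by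
    filter_upwards [h2] with R hR
    have := le_max_right (- Real.log v) (Real.log (V c))
    linarith
  -- lower bounds
  have hu : ∀ᶠ R in atTop, -1 ≤ Real.log (N R) / R := by
    filter_upwards [eventually_gt_atTop (0:ℝ)] with R hR
    have h1le : (1:ℝ) ≤ (N R : ℝ) := by exact_mod_cast hNone R hR.le
    have hlog : (0:ℝ) ≤ Real.log (N R) := Real.log_nonneg h1le
    have : (0:ℝ) ≤ Real.log (N R) / R := div_nonneg hlog hR.le
    linarith
  have hw : ∀ᶠ R in atTop, -1 ≤ Real.log (V R) / R := by
    filter_upwards [eventually_ge_atTop (max c (max 1 |Real.log v|))] with R hR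
    have hRc : c ≤ R := le_trans (le_max_left _ _) hR
    have hR1 : (1:ℝ) ≤ R := le_trans (le_max_left _ _) (le_trans (le_max_right _ _) hR)
    have hRv : |Real.log v| ≤ R := le_trans (le_max_right _ _) (le_trans (le_max_right _ _) hR)
    have hRpos : (0:ℝ) < R := lt_of_lt_of_le one_pos hR1
    have hvV : v ≤ V R := by
      have hsub : ball x (δ / 2) ⊆ closedBall x R :=
        ball_subset_closedBall.trans (closedBall_subset_closedBall (by linarith))
      exact ENNReal.toReal_mono (hVfin R hRpos) (measure_mono hsub)
    have hlog : Real.log v ≤ Real.log (V R) := Real.log_le_log hvpos hvV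
    rw [le_div_iff₀ hRpos]
    have : -R ≤ Real.log v := by
      have := neg_abs_le (Real.log v)
      linarith
    linarith
  have := limsup_div_eq_of_shift (fun R => Real.log (N R)) (fun R => Real.log (V R)) c C hc
    h1' h2' hu hw
  exact this
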